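/- Let H = (V, E) be a finite simple graph and let M be a matching on V disjoint from E, i.e., a set of unordered pairs of vertices such that M ∩ E = ∅ and no two distinct pairs in M share a vertex. If the graph G = (V, E ∪ M) obtained from H by adding the edges of M is word-representable, then H is 1-11-representable. -/

import Mathlib

/-- The subsequence of `w` consisting of all occurrences of `x` and `y`. -/
def restrictWord {V : Type*} [DecidableEq V] (w : List V) (x y : V) : List V :=
  w.filter (fun z => decide (z = x ∨ z = y))

/-- The number of occurrences of the consecutive pattern 11 in a word:
the number of indices `i` such that the `i`-th and `(i+1)`-th letters are equal. -/
def pattern11Count {V : Type*} [DecidableEq V] (l : List V) : ℕ :=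
  ((l.zip l.tail).filter (fun p => decide (p.1 = p.2))).length

/-- A word `w` over `V` `k`-11-represents the simple graph `G` if every vertex occurs in `w`
and, for all distinct `x y`, `xy` is an edge iff `w|_{x,y}` has at most `k` occurrences of
the pattern 11. -/
def Represents {V : Type*} [DecidableEq V] (k : ℕ) (w : List V) (G : SimpleGraph V) : Prop :=
  (∀ v : V, v ∈ w) ∧
  ∀ x y : V, x ≠ y → (G.Adj x y ↔ pattern11Count (restrictWord w x y) ≤ k)

/-- A graph is `k`-11-representable if some word `k`-11-represents it. -/
def Representable {V : Type*} [DecidableEq V] (k : ℕ) (G : SimpleGraph V) : Prop :=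
  ∃ w : List V, Represents k w G

/-- A word that is a permutation of the vertex set: each vertex occurs exactly once. -/
def IsPermWord {V : Type*} (p : List V) : Prop :=
  p.Nodup ∧ ∀ v : V, v ∈ p

/-- A graph is permutationally `k`-11-representable if some concatenation of permutations
of the vertex set `k`-11-represents it. -/
def PermRepresentable {V : Type*} [DecidableEq V] (k : ℕ) (G : SimpleGraph V) : Prop :=
  ∃ ps : List (List V), (∀ p ∈ ps, IsPermWord p) ∧ Represents k ps.flatten G

section Basics
variable {V : Type*} [DecidableEq V]

@[simp] lemma p11_nil : pattern11Count ([] : List V) = 0 := rfl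

@[simp] lemma p11_single (a : V) : pattern11Count [a] = 0 := rfl

lemma p11_cons_cons (a b : V) (l : List V) :
    pattern11Count (a :: b :: l) = (if a = b then 1 else 0) + pattern11Count (b :: l) := by
  simp only [pattern11Count, List.tail_cons, List.zip_cons_cons, List.filter_cons]
  by_cases h : a = b <;> simp [h, Nat.add_comm]

/-- exact append formula -/
lemma p11_append (A B : List V) (hA : A ≠ []) :
    pattern11Count (A ++ B) = pattern11Count A + pattern11Count (A.getLast hA :: B) := by
  induction A with
  | nil => exact absurd rfl hA
  | cons a A ih =>
    cases A with
    | nil => simp [pattern11Count]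
    | cons a' A' =>
      have h1 : (a :: a' :: A') ++ B = a :: ((a' :: A') ++ B) := rfl
      rw [h1]
      have h2 : (a' :: A') ++ B = a' :: (A' ++ B) := rfl
      rw [h2, p11_cons_cons, ← h2, ih (by simp)]
      rw [p11_cons_cons]
      have : (a :: a' :: A').getLast (by simp) = (a' :: A').getLast (by simp) := by
        simp [List.getLast]
      rw [this]
      ring

lemma p11_cons_le (a : V) (B : List V) :
    pattern11Count (a :: B) ≤ pattern11Count B + 1 := by
  cases B with
  | nil => simp
  | cons b B' => rw [p11_cons_cons]; split <;> omega

lemma p11_cons_ge (a : V) (B : List V) :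
    pattern11Count B ≤ pattern11Count (a :: B) := by
  cases B with
  | nil => simp
  | cons b B' => rw [p11_cons_cons]; omega

lemma p11_append_le (A B : List V) :
    pattern11Count (A ++ B) ≤ pattern11Count A + pattern11Count B + 1 := by
  by_cases hA : A = []
  · subst hA; simp
  · rw [p11_append A B hA]
    have := p11_cons_le (A.getLast hA) B
    omega

lemma p11_append_ge (A B : List V) :
    pattern11Count A + pattern11Count B ≤ pattern11Count (A ++ B) := by
  by_cases hA : A = []
  · subst hA; simp
  · rw [p11_append A B hA]
    have := p11_cons_ge (A.getLast hA) B
    omega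

end Basics

section JJ
set_option linter.unusedSectionVars false
variable {V : Type*} [DecidableEq V]

/-- alternating block word -/
def JW (a b : V) (k : ℕ) : List V := (List.replicate k ([a, b])).flatten

@[simp] lemma JW_zero (a b : V) : JW a b 0 = [] := rfl

lemma JW_succ (a b : V) (k : ℕ) : JW a b (k+1) = a :: b :: JW a b k := rfl

lemma JW_add (a b : V) (m n : ℕ) : JW a b (m+n) = JW a b m ++ JW a b n := by
  induction m with
  | zero => simp
  | succ m ih =>
    have h : m + 1 + n = (m + n) + 1 := by omega
    rw [h, JW_succ, JW_succ, ih]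
    rfl

lemma JW_succ' (a b : V) (k : ℕ) : JW a b (k+1) = JW a b k ++ [a, b] := by
  have : k + 1 = k + 1 := rfl
  rw [JW_add a b k 1]; rfl

lemma p11_JW_aux (a b : V) (hab : a ≠ b) :
    ∀ k, pattern11Count (JW a b k) = 0 ∧ pattern11Count (b :: JW a b k) = 0 := by
  intro k
  induction k with
  | zero => simp
  | succ k ih =>
    rw [JW_succ]
    constructor
    · rw [p11_cons_cons]
      simp only [hab, if_false]
      have := ih.2
      omega
    · rw [p11_cons_cons, p11_cons_cons]
      simp only [hab, Ne.symm hab, if_false]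
      have h1 := ih.1
      have h2 := ih.2
      omega

lemma p11_JW (a b : V) (hab : a ≠ b) (k : ℕ) : pattern11Count (JW a b k) = 0 :=
  (p11_JW_aux a b hab k).1

lemma p11_abb (a b : V) (hab : a ≠ b) : pattern11Count [a, b, b] = 1 := by
  rw [p11_cons_cons, p11_cons_cons]
  simp [hab]

lemma p11_aab (a b : V) (hab : a ≠ b) : pattern11Count [a, a, b] = 1 := by
  rw [p11_cons_cons, p11_cons_cons]
  simp [hab]

lemma p11_JW_b (a b : V) (hab : a ≠ b) (m : ℕ) :
    1 ≤ pattern11Count (JW a b (m+1) ++ [b]) := by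
  have h1 : JW a b (m+1) ++ [b] = JW a b m ++ [a, b, b] := by
    rw [JW_succ']; simp
  rw [h1]
  have := p11_append_ge (JW a b m) [a, b, b]
  rw [p11_abb a b hab] at this
  omega

lemma p11_a_JW (a b : V) (hab : a ≠ b) (m : ℕ) :
    1 ≤ pattern11Count ([a] ++ JW a b (m+1)) := by
  have h1 : [a] ++ JW a b (m+1) = [a, a, b] ++ JW a b m := by rw [JW_succ]; rfl
  rw [h1]
  have := p11_append_ge [a, a, b] (JW a b m)
  rw [p11_aab a b hab] at this
  omega

end JJ

section Restr
set_option linter.unusedSectionVars false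
variable {V : Type*} [DecidableEq V]

lemma restrict_append (u v : List V) (x y : V) :
    restrictWord (u ++ v) x y = restrictWord u x y ++ restrictWord v x y := by
  simp [restrictWord, List.filter_append]

lemma restrict_nil (x y : V) : restrictWord ([] : List V) x y = [] := rfl

lemma restrict_cons (a : V) (l : List V) (x y : V) :
    restrictWord (a :: l) x y =
      if a = x ∨ a = y then a :: restrictWord l x y else restrictWord l x y := by
  simp only [restrictWord, List.filter_cons]
  by_cases h : a = x ∨ a = y <;> simp [h]

lemma mem_restrict {l : List V} {x y z : V} :
    z ∈ restrictWord l x y ↔ z ∈ l ∧ (z = x ∨ z = y) := by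
  simp [restrictWord, List.mem_filter]

lemma restrict_comm (l : List V) (x y : V) :
    restrictWord l x y = restrictWord l y x := by
  simp only [restrictWord]
  apply List.filter_congr
  intro z _
  simp [or_comm]

lemma restrict_eq_nil {l : List V} {x y : V} (h : ∀ z ∈ l, ¬(z = x ∨ z = y)) :
    restrictWord l x y = [] := by
  induction l with
  | nil => rfl
  | cons a l ih =>
    rw [restrict_cons]
    have ha := h a (by simp)
    simp only [ha, if_false]
    exact ih (fun z hz => h z (by simp [hz]))

lemma restrict_flatMap (ps : List (Sym2 V)) (g : Sym2 V → List V) (x y : V) :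
    restrictWord (ps.flatMap g) x y = ps.flatMap (fun e => restrictWord (g e) x y) := by
  induction ps with
  | nil => rfl
  | cons e ps ih => simp [List.flatMap_cons, restrict_append, ih]

lemma count_restrict_left (l : List V) (x y : V) :
    (restrictWord l x y).count x = l.count x := by
  induction l with
  | nil => rfl
  | cons a l ih =>
    rw [restrict_cons]
    by_cases h : a = x ∨ a = y
    · simp only [h, if_true]
      by_cases hax : a = x
      · subst hax; simp [List.count_cons, ih]
      · simp [List.count_cons, hax, ih]
    · push_neg at h
      simp [List.count_cons, h.1, h.2, ih]

lemma count_restrict_right (l : List V) (x y : V) :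
    (restrictWord l x y).count y = l.count y := by
  rw [restrict_comm]; exact count_restrict_left l y x

lemma restrict_all_mem (l : List V) (x y : V) :
    ∀ z ∈ restrictWord l x y, z = x ∨ z = y := fun z hz => (mem_restrict.1 hz).2

/-- restriction of a list under an injective map -/
lemma restrict_map (f : V → V) (hf : Function.Injective f) (l : List V) (x y : V) :
    restrictWord (l.map f) (f x) (f y) = (restrictWord l x y).map f := by
  induction l with
  | nil => rfl
  | cons a l ih =>
    simp only [List.map_cons]
    rw [restrict_cons, restrict_cons]
    by_cases h : a = x ∨ a = y
    · have : f a = f x ∨ f a = f y := by rcases h with h | h <;> simp [h]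
      simp [this, h, ih]
    · have : ¬(f a = f x ∨ f a = f y) := by
        push_neg at h ⊢
        exact ⟨fun hc => h.1 (hf hc), fun hc => h.2 (hf hc)⟩
      simp [this, h, ih]

end Restr

section Firsts
set_option linter.unusedSectionVars false
set_option linter.unusedVariables false
variable {V : Type*} [DecidableEq V]

/-- list of first occurrences, in order -/
def firsts : List V → List V
  | [] => []
  | a :: l => a :: (firsts l).filter (fun z => decide (z ≠ a))

@[simp] lemma firsts_nil : firsts ([] : List V) = [] := rfl

lemma firsts_cons (a : V) (l : List V) :
    firsts (a :: l) = a :: (firsts l).filter (fun z => decide (z ≠ a)) := rfl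

lemma mem_firsts {l : List V} {z : V} : z ∈ firsts l ↔ z ∈ l := by
  induction l with
  | nil => simp [firsts]
  | cons a l ih =>
    rw [firsts_cons]
    constructor
    · intro h
      rcases List.mem_cons.1 h with h | h
      · simp [h]
      · exact List.mem_cons.2 (Or.inr (ih.1 (List.mem_of_mem_filter h)))
    · intro h
      by_cases hz : z = a
      · simp [hz]
      · rcases List.mem_cons.1 h with h | h
        · exact absurd h hz
        · exact List.mem_cons.2 (Or.inr (by
            rw [List.mem_filter]
            exact ⟨ih.2 h, by simp [hz]⟩))

lemma count_firsts (l : List V) (z : V) :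
    (firsts l).count z = if z ∈ l then 1 else 0 := by
  induction l with
  | nil => simp
  | cons a l ih =>
    rw [firsts_cons]
    by_cases hz : z = a
    · subst hz
      simp only [List.count_cons_self, List.mem_cons, true_or, if_true]
      have : z ∉ (firsts l).filter (fun u => decide (u ≠ z)) := by
        intro hmem
        have := List.of_mem_filter hmem
        simp at this
      rw [List.count_eq_zero_of_not_mem this]
    · rw [List.count_cons_of_ne (Ne.symm hz)]
      by_cases hmem : z ∈ l
      · have : z ∈ (firsts l).filter (fun u => decide (u ≠ a)) := by
          rw [List.mem_filter]
          exact ⟨mem_firsts.2 hmem, by simp [hz]⟩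
        rw [List.count_filter (by simp [hz])] at *
        simp [ih, hmem, hz, List.mem_cons]
      · have hz2 : z ∉ (firsts l).filter (fun u => decide (u ≠ a)) := by
          intro hc
          exact hmem (mem_firsts.1 (List.mem_of_mem_filter hc))
        rw [List.count_eq_zero_of_not_mem hz2]
        simp [hmem, hz]

/-- firsts commutes with filter -/
lemma firsts_filter (p : V → Bool) (l : List V) :
    firsts (l.filter p) = (firsts l).filter p := by
  induction l with
  | nil => rfl
  | cons a l ih =>
    rw [List.filter_cons, firsts_cons]
    by_cases hp : p a
    · simp only [hp, if_true]
      rw [firsts_cons, ih, List.filter_cons]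
      simp only [hp, if_true]
      congr 1
      rw [List.filter_comm]
    · simp only [hp, Bool.false_eq_true, if_false]
      rw [ih, List.filter_cons]
      simp only [hp, Bool.false_eq_true, if_false]
      rw [List.filter_comm]
      have : ∀ z ∈ (firsts l).filter p, (decide (z ≠ a)) = true := by
        intro z hz
        have hzp := List.of_mem_filter hz
        have hza : z ≠ a := by
          intro hc; subst hc
          rw [hzp] at hp; exact hp rfl
        simp [hza]
      exact (List.filter_eq_self.2 this).symm

lemma restrict_firsts (l : List V) (x y : V) :
    restrictWord (firsts l) x y = firsts (restrictWord l x y) := by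
  unfold restrictWord
  rw [firsts_filter]

end Firsts

section Struct
set_option linter.unusedSectionVars false
set_option linter.unusedVariables false
variable {V : Type*} [DecidableEq V]

lemma cons_JW (x y : V) : ∀ k, x :: JW y x k = JW x y k ++ [x] := by
  intro k
  induction k with
  | zero => simp
  | succ k ih =>
    rw [JW_succ y x, JW_succ x y]
    simp only [List.cons_append]
    rw [← ih]

lemma cons_JW' (x y : V) (k : ℕ) : x :: (JW y x k ++ [y]) = JW x y (k+1) := by
  rw [← List.cons_append, cons_JW, List.append_assoc, JW_succ']
  rfl

lemma JW_head (x y : V) (k : ℕ) (h : k ≠ 0) : ∃ t, JW x y k = x :: t := by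
  match k, h with
  | (k+1), _ => exact ⟨_, JW_succ x y k⟩

/-- Structure of 2-letter alternating words. -/
lemma alt_structure (x y : V) (hxy : x ≠ y) :
    ∀ n (l : List V), l.length = n → (∀ z ∈ l, z = x ∨ z = y) → pattern11Count l = 0 →
    ∃ k, l = JW x y k ∨ l = JW x y k ++ [x] ∨ l = JW y x k ∨ l = JW y x k ++ [y] := by
  intro n
  induction n using Nat.strong_induction_on with
  | _ n ih =>
    intro l hlen hmem hp
    match l with
    | [] => exact ⟨0, Or.inl rfl⟩
    | [a] =>
      rcases hmem a (by simp) with ha | ha <;> subst ha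
      · exact ⟨0, Or.inr (Or.inl (by simp [JW]))⟩
      · exact ⟨0, Or.inr (Or.inr (Or.inr (by simp [JW])))⟩
    | a :: b :: t =>
      rw [p11_cons_cons] at hp
      have hab : a ≠ b := by
        intro hc; subst hc; simp at hp
      simp only [hab, if_false] at hp
      have hp' : pattern11Count (b :: t) = 0 := by omega
      have hlen' : (b :: t).length < n := by simp at hlen ⊢; omega
      obtain ⟨k, hcase⟩ := ih _ hlen' (b :: t) rfl
        (fun z hz => hmem z (by simp [List.mem_cons] at hz ⊢; tauto)) hp'
      rcases hmem a (by simp) with ha | ha <;> rcases hmem b (by simp) with hb | hb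
      · exact absurd (ha.trans hb.symm) hab
      · -- a = x, b = y
        subst ha; subst hb
        rcases hcase with h | h | h | h
        · -- b::t = JW a b k, head should be a but is b
          rcases Nat.eq_zero_or_pos k with hk | hk
          · subst hk; simp at h
          · obtain ⟨t', ht'⟩ := JW_head a b k (by omega)
            rw [ht'] at h
            exact absurd (List.head_eq_of_cons_eq h) hab.symm
        · rcases Nat.eq_zero_or_pos k with hk | hk
          · subst hk
            simp [JW] at h
            exact absurd h.1 hab.symm
          · obtain ⟨t', ht'⟩ := JW_head a b k (by omega)
            rw [ht'] at h
            simp only [List.cons_append] at h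
            exact absurd (List.head_eq_of_cons_eq h) hab.symm
        · -- b::t = JW b a k : l = a :: JW b a k = JW a b k ++ [a]
          refine ⟨k, Or.inr (Or.inl ?_)⟩
          rw [h, cons_JW]
        · -- b::t = JW b a k ++ [b] : l = JW a b (k+1)
          refine ⟨k+1, Or.inl ?_⟩
          rw [h, cons_JW']
      · -- a = y, b = x
        subst ha; subst hb
        rcases hcase with h | h | h | h
        ·
          -- after subst: x := b, y := a. hcase: b::t = JW b a k : fine head b ✓:
          -- l = a :: JW b a k = JW a b k ++ [a] : shape "JW y x k ++ [y]" with (x,y)=(b,a): yes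
          refine ⟨k, Or.inr (Or.inr (Or.inr ?_))⟩
          rw [h, cons_JW]
        · -- b::t = JW b a k ++ [b]: l = a :: that = JW a b (k+1) = JW y x (k+1) shape 3
          refine ⟨k+1, Or.inr (Or.inr (Or.inl ?_))⟩
          rw [h, cons_JW']
        · -- b::t = JW a b k : head a ≠ b
          rcases Nat.eq_zero_or_pos k with hk | hk
          · subst hk; simp at h
          · obtain ⟨t', ht'⟩ := JW_head a b k (by omega)
            rw [ht'] at h
            exact absurd (List.head_eq_of_cons_eq h) hab.symm
        · rcases Nat.eq_zero_or_pos k with hk | hk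
          · subst hk
            simp [JW] at h
            exact absurd h.1 hab.symm
          · obtain ⟨t', ht'⟩ := JW_head a b k (by omega)
            rw [ht'] at h
            simp only [List.cons_append] at h
            exact absurd (List.head_eq_of_cons_eq h) hab.symm
      · exact absurd (ha.trans hb.symm) hab

lemma count_JW_left (x y : V) (hxy : x ≠ y) (k : ℕ) : (JW x y k).count x = k := by
  induction k with
  | zero => simp
  | succ k ih => rw [JW_succ]; simp [List.count_cons, hxy, Ne.symm hxy, ih]

lemma count_JW_right (x y : V) (hxy : x ≠ y) (k : ℕ) : (JW x y k).count y = k := by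
  induction k with
  | zero => simp
  | succ k ih => rw [JW_succ]; simp [List.count_cons, hxy, Ne.symm hxy, ih]

/-- an alternating word with equal counts of its two letters is an even block word -/
lemma alt_even_structure (x y : V) (hxy : x ≠ y) (l : List V)
    (hmem : ∀ z ∈ l, z = x ∨ z = y) (hp : pattern11Count l = 0)
    (hc : l.count x = l.count y) :
    ∃ k, l = JW x y k ∨ l = JW y x k := by
  obtain ⟨k, h | h | h | h⟩ := alt_structure x y hxy l.length l rfl hmem hp
  · exact ⟨k, Or.inl h⟩
  · exfalso
    rw [h] at hc
    rw [List.count_append, List.count_append, count_JW_left x y hxy, count_JW_right x y hxy] at hc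
    simp [hxy, Ne.symm hxy, List.count_singleton] at hc
  · exact ⟨k, Or.inr h⟩
  · exfalso
    rw [h] at hc
    rw [List.count_append, List.count_append, count_JW_left y x (Ne.symm hxy),
      count_JW_right y x (Ne.symm hxy)] at hc
    simp [hxy, Ne.symm hxy, List.count_singleton] at hc

end Struct

section Unif
set_option linter.unusedSectionVars false
set_option linter.unusedVariables false
variable {V : Type*} [DecidableEq V]

lemma restrict_filter (p : V → Bool) (l : List V) (x y : V) :
    restrictWord (l.filter p) x y = (restrictWord l x y).filter p := by
  unfold restrictWord
  rw [List.filter_comm]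

lemma filter_both_nil (x y : V) (L : List V) (hmem : ∀ z ∈ L, z = x ∨ z = y) :
    (L.filter (fun z => decide (z ≠ y))).filter (fun z => decide (z ≠ x)) = [] := by
  rw [List.filter_eq_nil_iff]
  intro a ha
  have h3 := List.of_mem_filter ha
  have h4 := hmem a (List.mem_of_mem_filter ha)
  simp only [ne_eq, decide_not] at h3 ⊢
  simp at h3 ⊢
  tauto

lemma firsts_pair (x y : V) (hxy : x ≠ y) :
    ∀ (l : List V), (∀ z ∈ l, z = x ∨ z = y) → y ∈ l → firsts (x :: l) = [x, y] := by
  intro l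
  induction l with
  | nil => intro _ h; simp at h
  | cons a t ih =>
    intro hmem hy
    rcases hmem a (by simp) with ha | ha
    · subst ha
      have hyt : y ∈ t := by
        rcases List.mem_cons.1 hy with h | h
        · exact absurd h.symm hxy
        · exact h
      rw [firsts_cons]
      have : firsts (a :: t) = [a, y] := ih (fun z hz => hmem z (by simp [hz])) hyt
      rw [this]
      simp [hxy, Ne.symm hxy]
    · subst ha
      rw [firsts_cons, firsts_cons]
      have hnil : ((firsts t).filter (fun z => decide (z ≠ a))).filter (fun z => decide (z ≠ x)) = [] := by
        apply filter_both_nil x a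
        intro z hz
        have := hmem z (by simp [mem_firsts.1 hz])
        tauto
      rw [List.filter_cons]
      have hax : (decide (a ≠ x)) = true := by
        simp only [ne_eq, decide_not, Bool.not_eq_true', decide_eq_false_iff_not]
        exact fun hc => hxy hc.symm
      rw [hax, if_pos rfl, hnil]

/-- counts in the filtered firsts word -/
lemma count_tau (w : List V) (p : V → Bool) (z : V) (hz : z ∈ w) :
    ((firsts w).filter p).count z = if p z then 1 else 0 := by
  by_cases hp : p z
  · rw [List.count_filter (by simp [hp])]
    rw [count_firsts]
    simp [hz, hp]
  · rw [List.count_eq_zero_of_not_mem]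
    · simp [hp]
    · intro hc
      have := List.of_mem_filter hc
      rw [this] at hp; exact hp rfl

lemma uniformize [Fintype V] (G : SimpleGraph V) :
    ∀ (m : ℕ) (w : List V), (∑ v : V, (Finset.univ.sup (fun u => w.count u) - w.count v)) = m →
    (∀ v : V, v ∈ w) →
    (∀ x y, x ≠ y → G.Adj x y → pattern11Count (restrictWord w x y) = 0) →
    (∀ x y, x ≠ y → ¬ G.Adj x y → 1 ≤ pattern11Count (restrictWord w x y)) →
    ∃ w' : List V, (∀ v : V, v ∈ w') ∧
      (∀ x y, x ≠ y → G.Adj x y → pattern11Count (restrictWord w' x y) = 0) ∧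
      (∀ x y, x ≠ y → ¬ G.Adj x y → 1 ≤ pattern11Count (restrictWord w' x y)) ∧
      (∀ x y : V, w'.count x = w'.count y) := by
  intro m
  induction m using Nat.strong_induction_on with
  | _ m ih =>
    intro w hμ hmem hedge hnon
    set K := Finset.univ.sup (fun u => w.count u) with hK
    by_cases huni : ∀ v : V, w.count v = K
    · refine ⟨w, hmem, hedge, hnon, fun x y => by rw [huni x, huni y]⟩
    · push_neg at huni
      obtain ⟨v₀, hv₀⟩ := huni
      have hv₀le : w.count v₀ ≤ K := Finset.le_sup (f := fun u => w.count u) (Finset.mem_univ v₀)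
      have hv₀lt : w.count v₀ < K := lt_of_le_of_ne hv₀le hv₀
      obtain ⟨z₀, _, hz₀⟩ := Finset.exists_min_image Finset.univ (fun v => w.count v)
        ⟨v₀, Finset.mem_univ v₀⟩
      set minc := w.count z₀ with hminc
      have hminlt : minc < K := lt_of_le_of_lt (hz₀ v₀ (Finset.mem_univ v₀)) hv₀lt
      have hminle : ∀ u : V, minc ≤ w.count u := fun u => hz₀ u (Finset.mem_univ u)
      set p : V → Bool := fun z => decide (w.count z = minc) with hp
      set τ := (firsts w).filter p with hτ
      set w' := w ++ τ with hw'
      -- counts in w'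
      have hcount' : ∀ z : V, w'.count z = w.count z + (if w.count z = minc then 1 else 0) := by
        intro z
        rw [hw', List.count_append, hτ, count_tau w p z (hmem z)]
        simp only [hp]
        by_cases h : w.count z = minc <;> simp [h]
      -- new sup = K
      have hsup' : Finset.univ.sup (fun u => w'.count u) = K := by
        apply le_antisymm
        · apply Finset.sup_le
          intro u _
          rw [hcount' u]
          by_cases h : w.count u = minc
          · simp [h]; omega
          · simp [h]; exact Finset.le_sup (f := fun u => w.count u) (Finset.mem_univ u)
        · obtain ⟨b, _, hb⟩ := Finset.exists_mem_eq_sup Finset.univ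
            ⟨v₀, Finset.mem_univ v₀⟩ (fun u => w.count u)
          rw [← hK] at hb
          have hbne : ¬ (w.count b = minc) := by omega
          have hcb : w'.count b = K := by
            rw [hcount' b]
            simp [hbne]
            omega
          rw [← hcb]
          exact Finset.le_sup (f := fun u => w'.count u) (Finset.mem_univ b)
      -- measure decreases
      have hμ' : (∑ v : V, (Finset.univ.sup (fun u => w'.count u) - w'.count v)) < m := by
        have hrw : ∀ v : V, Finset.univ.sup (fun u => w'.count u) - w'.count v
            = K - w'.count v := by
          intro v; rw [hsup']
        calc (∑ v : V, (Finset.univ.sup (fun u => w'.count u) - w'.count v))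
            = ∑ v : V, (K - w'.count v) := Finset.sum_congr rfl (fun v _ => hrw v)
          _ < ∑ v : V, (K - w.count v) := by
              apply Finset.sum_lt_sum
              · intro i _
                have h1 := hcount' i
                by_cases h : w.count i = minc
                · rw [if_pos h] at h1
                  omega
                · rw [if_neg h] at h1
                  omega
              · refine ⟨z₀, Finset.mem_univ z₀, ?_⟩
                have h1 := hcount' z₀
                have h2 : w.count z₀ = minc := hminc.symm
                rw [if_pos h2] at h1
                omega
          _ = m := hμ
      -- membership
      have hmem' : ∀ v : V, v ∈ w' := fun v => by
        rw [hw']; exact List.mem_append.2 (Or.inl (hmem v))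
      -- edges stay alternating
      have hedge' : ∀ x y, x ≠ y → G.Adj x y → pattern11Count (restrictWord w' x y) = 0 := by
        intro x y hxy hadj
        rw [hw', restrict_append]
        have hτr : restrictWord τ x y = (restrictWord (firsts w) x y).filter p := by
          rw [hτ, restrict_filter]
        rw [restrict_firsts] at hτr
        set l := restrictWord w x y with hl
        have hlmem : ∀ z ∈ l, z = x ∨ z = y := restrict_all_mem w x y
        have hlp : pattern11Count l = 0 := hedge x y hxy hadj
        have hcx : l.count x = w.count x := count_restrict_left w x y
        have hcy : l.count y = w.count y := count_restrict_right w x y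
        obtain ⟨k, hsh⟩ := alt_structure x y hxy l.length l rfl hlmem hlp
        -- wlog-style: handle the 4 shapes
        have key : ∀ (h o : V), h ≠ o → ((z : V) → z = h ∨ z = o ↔ z = x ∨ z = y) →
            (l = JW h o k ∨ l = JW h o k ++ [h]) →
            pattern11Count (l ++ (firsts l).filter p) = 0 := by
          intro h o hho hiff hshape
          have hoin : o ∈ w := hmem o
          have hhin : h ∈ w := hmem h
          have hco : l.count o = w.count o := by
            rcases (hiff o).1 (Or.inr rfl) with h1 | h1
            · rw [h1]; exact hcx
            · rw [h1]; exact hcy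
          have hch : l.count h = w.count h := by
            rcases (hiff h).1 (Or.inl rfl) with h1 | h1
            · rw [h1]; exact hcx
            · rw [h1]; exact hcy
          rcases hshape with hsh1 | hsh1
          · -- even shape
            have hk : k ≠ 0 := by
              intro hk0
              rw [hk0] at hsh1
              simp [JW] at hsh1
              rw [hsh1] at hch
              simp at hch
              have := List.count_pos_iff.2 hhin
              omega
            obtain ⟨k', rfl⟩ : ∃ k', k = k' + 1 := ⟨k - 1, by omega⟩
            have hlform : l = h :: (o :: JW h o k') := by rw [hsh1, JW_succ]
            have hf : firsts l = [h, o] := by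
              rw [hlform]
              apply firsts_pair h o hho
              · intro z hz
                have : z ∈ l := by rw [hlform]; simp [hz]
                have := hlmem z this
                rw [← hiff z] at this
                exact this
              · simp
            rw [hf]
            have hcounts : w.count h = k' + 1 ∧ w.count o = k' + 1 := by
              constructor
              · rw [← hch, hsh1, count_JW_left h o hho]
              · rw [← hco, hsh1, count_JW_right h o hho]
            by_cases hmin : w.count h = minc
            · have hmin2 : w.count o = minc := by omega
              have : [h, o].filter p = [h, o] := by
                simp [hp, List.filter_cons, hmin, hmin2]
              rw [this, hsh1, ← JW_succ']
              exact p11_JW h o hho _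
            · have hmin2 : ¬ (w.count o = minc) := by omega
              have : [h, o].filter p = [] := by
                simp [hp, List.filter_cons, hmin, hmin2]
              rw [this, List.append_nil]
              exact hlp
          · -- odd shape, counts: h = k+1, o = k
            have hcounts : w.count h = k + 1 ∧ w.count o = k := by
              constructor
              · rw [← hch, hsh1, List.count_append, count_JW_left h o hho]
                simp
              · rw [← hco, hsh1, List.count_append, count_JW_right h o hho]
                simp [Ne.symm hho, hho]
            have hk : k ≠ 0 := by
              intro hk0
              have := List.count_pos_iff.2 hoin
              omega
            obtain ⟨k', rfl⟩ : ∃ k', k = k' + 1 := ⟨k - 1, by omega⟩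
            have hlform : l = h :: (o :: (JW h o k' ++ [h])) := by
              rw [hsh1, JW_succ]; rfl
            have hf : firsts l = [h, o] := by
              rw [hlform]
              apply firsts_pair h o hho
              · intro z hz
                have : z ∈ l := by rw [hlform]; simp [hz]
                have := hlmem z this
                rw [← hiff z] at this
                exact this
              · simp
            rw [hf]
            have hminh : ¬ (w.count h = minc) := by
              have := hminle o
              omega
            by_cases hmino : w.count o = minc
            · have : [h, o].filter p = [o] := by
                simp [hp, List.filter_cons, hminh, hmino]
              rw [this, hsh1]
              have : JW h o (k'+1) ++ [h] ++ [o] = JW h o (k'+2) := by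
                rw [JW_succ' h o (k'+1)]
                simp
              rw [this]
              exact p11_JW h o hho _
            · have : [h, o].filter p = [] := by
                simp [hp, List.filter_cons, hminh, hmino]
              rw [this, List.append_nil]
              exact hlp
        rw [hτr]
        rcases hsh with h1 | h1 | h1 | h1
        · exact key x y hxy (fun z => Iff.rfl) (Or.inl h1)
        · exact key x y hxy (fun z => Iff.rfl) (Or.inr h1)
        · exact key y x (Ne.symm hxy) (fun z => or_comm) (Or.inl h1)
        · exact key y x (Ne.symm hxy) (fun z => or_comm) (Or.inr h1)
      -- non-edges keep a pattern
      have hnon' : ∀ x y, x ≠ y → ¬ G.Adj x y → 1 ≤ pattern11Count (restrictWord w' x y) := by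
        intro x y hxy hnadj
        rw [hw', restrict_append]
        have := p11_append_ge (restrictWord w x y) (restrictWord τ x y)
        have h0 := hnon x y hxy hnadj
        omega
      exact ih _ hμ' w' rfl hmem' hedge' hnon'

end Unif

section Perms
set_option linter.unusedSectionVars false
set_option linter.unusedVariables false
variable {V : Type*} [DecidableEq V]

lemma restrict_single {l : List V} {x y : V} (hx : x ∉ l) (hy : y ∈ l) (hnd : l.Nodup) :
    restrictWord l x y = [y] := by
  induction l with
  | nil => simp at hy
  | cons a t ih =>
    rw [restrict_cons]
    by_cases hax : a = x
    · exact absurd (hax ▸ List.mem_cons_self (a := a) (l := t)) hx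
    · by_cases hay : a = y
      · subst hay
        simp only [true_or, or_true, if_true]
        have : restrictWord t x a = [] := by
          apply restrict_eq_nil
          intro z hz
          rintro (rfl | rfl)
          · exact hx (List.mem_cons.2 (Or.inr hz))
          · exact (List.nodup_cons.1 hnd).1 hz
        rw [this]
      · have : ¬ (a = x ∨ a = y) := by tauto
        simp only [this, if_false]
        apply ih (fun hc => hx (List.mem_cons.2 (Or.inr hc)))
          (List.mem_of_ne_of_mem (fun hc => hay hc.symm) hy)
          (List.nodup_cons.1 hnd).2

lemma restrict_eq_pair {l : List V} {x y : V} (hxy : x ≠ y) (hx : x ∈ l) (hy : y ∈ l)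
    (hnd : l.Nodup) :
    restrictWord l x y = [x, y] ∨ restrictWord l x y = [y, x] := by
  induction l with
  | nil => simp at hx
  | cons a t ih =>
    rw [restrict_cons]
    obtain ⟨hat, hndt⟩ := List.nodup_cons.1 hnd
    by_cases hax : a = x
    · subst hax
      simp only [true_or, if_true]
      left
      congr 1
      apply restrict_single (hx := hat)
        (hy := List.mem_of_ne_of_mem (fun hc => hxy hc.symm) hy) hndt
    · by_cases hay : a = y
      · subst hay
        simp only [or_true, if_true]
        right
        congr 1
        rw [restrict_comm]
        apply restrict_single (hx := hat)
          (hy := List.mem_of_ne_of_mem (fun hc => hxy hc) hx) hndt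
      · have hne : ¬ (a = x ∨ a = y) := by tauto
        simp only [hne, if_false]
        exact ih (List.mem_of_ne_of_mem (fun hc => hax hc.symm) hx)
          (List.mem_of_ne_of_mem (fun hc => hay hc.symm) hy) hndt

lemma flatMap_const {A : Type*} {ps : List A} {g : A → List V} {c : List V}
    (h : ∀ e ∈ ps, g e = c) : ps.flatMap g = (List.replicate ps.length c).flatten := by
  induction ps with
  | nil => rfl
  | cons e ps ih =>
    rw [List.flatMap_cons, h e (by simp), List.length_cons, List.replicate_succ,
      List.flatten_cons, ih (fun f hf => h f (by simp [hf]))]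

lemma JW_flat (a b : V) : ∀ n, (List.replicate n (JW a b 2)).flatten = JW a b (2*n) := by
  intro n
  induction n with
  | zero => simp
  | succ n ih =>
    rw [List.replicate_succ, List.flatten_cons, ih]
    have : 2 * (n+1) = 2 + 2*n := by omega
    rw [this, JW_add]

lemma pair_pair_JW (s t : V) : ([s,t] ++ [s,t] : List V) = JW s t 2 := rfl

end Perms

section Listing
set_option linter.unusedSectionVars false
set_option linter.unusedVariables false
variable {V : Type*} [DecidableEq V]

lemma nodup_anchor {L' P S : List V} {a b : V} (hnd : L'.Nodup)
    (hd : L' = P ++ a :: b :: S) :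
    a ∉ P ∧ b ∉ P ∧ a ∉ S ∧ b ∉ S ∧ a ≠ b ∧ P.Nodup ∧ S.Nodup ∧ (∀ z ∈ P, z ∉ S) := by
  rw [hd] at hnd
  rw [List.nodup_append] at hnd
  obtain ⟨hP, hQ, hdisj⟩ := hnd
  obtain ⟨haQ, hQ2⟩ := List.nodup_cons.1 hQ
  obtain ⟨hbS, hS⟩ := List.nodup_cons.1 hQ2
  refine ⟨fun hc => hdisj _ hc _ (by simp) rfl, fun hc => hdisj _ hc _ (by simp) rfl,
    fun hc => haQ (by simp [hc]), hbS, fun hc => haQ (by simp [hc]), hP, hS, ?_⟩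
  intro z hz hzS
  exact hdisj _ hz _ (by simp [hzS]) rfl

lemma restrict_anchor_pair {L' P S : List V} {a b : V} (hnd : L'.Nodup)
    (hd : L' = P ++ a :: b :: S) :
    restrictWord L' a b = [a, b] := by
  obtain ⟨haP, hbP, haS, hbS, hab, _, _, _⟩ := nodup_anchor hnd hd
  rw [hd, restrict_append, restrict_cons, restrict_cons]
  rw [restrict_eq_nil (l := P) (fun z hz => by rintro (rfl | rfl); exacts [haP hz, hbP hz])]
  rw [restrict_eq_nil (l := S) (fun z hz => by rintro (rfl | rfl); exacts [haS hz, hbS hz])]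
  simp

lemma restrict_anchor_mixed {L' P S : List V} {a b z : V} (hnd : L'.Nodup)
    (hd : L' = P ++ a :: b :: S) (hzmem : z ∈ L') (hza : z ≠ a) (hzb : z ≠ b) :
    (restrictWord L' a z = [z, a] ∧ restrictWord L' b z = [z, b]) ∨
    (restrictWord L' a z = [a, z] ∧ restrictWord L' b z = [b, z]) := by
  obtain ⟨haP, hbP, haS, hbS, hab, hP, hS, hPS⟩ := nodup_anchor hnd hd
  have hzPS : z ∈ P ∨ z ∈ S := by
    rw [hd] at hzmem
    rcases List.mem_append.1 hzmem with h | h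
    · exact Or.inl h
    · rcases List.mem_cons.1 h with h | h
      · exact absurd h hza
      · rcases List.mem_cons.1 h with h | h
        · exact absurd h hzb
        · exact Or.inr h
  have hba : ¬ (b = a ∨ b = z) := by
    rintro (hc | hc)
    · exact hab hc.symm
    · exact hzb hc.symm
  have hab2 : ¬ (a = b ∨ a = z) := by
    rintro (hc | hc)
    · exact hab hc
    · exact hza hc.symm
  rcases hzPS with hzP | hzS
  · left
    have hzS' : z ∉ S := hPS z hzP
    have hSnilA : restrictWord S a z = [] :=
      restrict_eq_nil (fun u hu => by rintro (rfl | rfl); exacts [haS hu, hzS' hu])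
    have hSnilB : restrictWord S b z = [] :=
      restrict_eq_nil (fun u hu => by rintro (rfl | rfl); exacts [hbS hu, hzS' hu])
    constructor
    · rw [hd, restrict_append, restrict_single (l := P) haP hzP hP,
        restrict_cons, restrict_cons, hSnilA]
      simp [hba]
    · rw [hd, restrict_append, restrict_single (l := P) hbP hzP hP,
        restrict_cons, restrict_cons, hSnilB]
      simp [hab2]
  · right
    have hzP' : z ∉ P := fun hc => hPS z hc hzS
    have hPnilA : restrictWord P a z = [] :=
      restrict_eq_nil (fun u hu => by rintro (rfl | rfl); exacts [haP hu, hzP' hu])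
    have hPnilB : restrictWord P b z = [] :=
      restrict_eq_nil (fun u hu => by rintro (rfl | rfl); exacts [hbP hu, hzP' hu])
    constructor
    · rw [hd, restrict_append, hPnilA, restrict_cons, restrict_cons,
        restrict_single (l := S) haS hzS hS]
      simp [hba]
    · rw [hd, restrict_append, hPnilB, restrict_cons, restrict_cons,
        restrict_single (l := S) hbS hzS hS]
      simp [hab2]

/-- restriction of the swapped list equals restriction of the original, for pairs other
than the swapped pair -/
lemma restrict_swap_eq {L' P S : List V} {a b : V} (hnd : L'.Nodup)
    (hd : L' = P ++ a :: b :: S) (hmem : ∀ v : V, v ∈ L') (x y : V) (hxy : x ≠ y)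
    (hno : ¬((x = a ∧ y = b) ∨ (x = b ∧ y = a))) :
    restrictWord (L'.map (Equiv.swap a b)) x y = restrictWord L' x y := by
  have hab : a ≠ b := (nodup_anchor hnd hd).2.2.2.2.1
  set σ := Equiv.swap a b with hσ
  have hinj : Function.Injective (σ : V → V) := σ.injective
  have hmap : ∀ u v : V, restrictWord (L'.map σ) (σ u) (σ v) = (restrictWord L' u v).map σ :=
    fun u v => restrict_map σ hinj L' u v
  have hσa : σ a = b := Equiv.swap_apply_left a b
  have hσb : σ b = a := Equiv.swap_apply_right a b
  by_cases hxab : x = a ∨ x = b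
  · have hyab : ¬(y = a ∨ y = b) := by
      rintro (rfl | rfl) <;> rcases hxab with rfl | rfl
      · exact hxy rfl
      · exact hno (Or.inr ⟨rfl, rfl⟩)
      · exact hno (Or.inl ⟨rfl, rfl⟩)
      · exact hxy rfl
    push_neg at hyab
    have hσy : σ y = y := Equiv.swap_apply_of_ne_of_ne hyab.1 hyab.2
    rcases hxab with rfl | rfl
    · -- x = a
      have h1 := hmap b y
      rw [hσb, hσy] at h1
      rcases restrict_anchor_mixed hnd hd (hmem y) hyab.1 hyab.2 with ⟨hA, hB⟩ | ⟨hA, hB⟩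
      · rw [h1, hB, hA]
        simp [hσy, hσb]
      · rw [h1, hB, hA]
        simp [hσy, hσb]
    · -- x = b
      have h1 := hmap a y
      rw [hσa, hσy] at h1
      rcases restrict_anchor_mixed hnd hd (hmem y) hyab.1 hyab.2 with ⟨hA, hB⟩ | ⟨hA, hB⟩
      · rw [h1, hA, hB]
        simp [hσy, hσa]
      · rw [h1, hA, hB]
        simp [hσy, hσa]
  · by_cases hyab : y = a ∨ y = b
    · push_neg at hxab
      have hσx : σ x = x := Equiv.swap_apply_of_ne_of_ne hxab.1 hxab.2
      rcases hyab with rfl | rfl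
      · -- y = a
        have h1 := hmap x b
        rw [hσb, hσx] at h1
        rcases restrict_anchor_mixed hnd hd (hmem x) hxab.1 hxab.2 with ⟨hA, hB⟩ | ⟨hA, hB⟩
        · rw [h1, restrict_comm L' x b, hB, restrict_comm L' x y, hA]
          simp [hσx, hσb]
        · rw [h1, restrict_comm L' x b, hB, restrict_comm L' x y, hA]
          simp [hσx, hσb]
      · -- y = b
        have h1 := hmap x a
        rw [hσa, hσx] at h1
        rcases restrict_anchor_mixed hnd hd (hmem x) hxab.1 hxab.2 with ⟨hA, hB⟩ | ⟨hA, hB⟩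
        · rw [h1, restrict_comm L' x a, hA, restrict_comm L' x y, hB]
          simp [hσx, hσa]
        · rw [h1, restrict_comm L' x a, hA, restrict_comm L' x y, hB]
          simp [hσx, hσa]
    · push_neg at hxab; push_neg at hyab
      have hσx : σ x = x := Equiv.swap_apply_of_ne_of_ne hxab.1 hxab.2
      have hσy : σ y = y := Equiv.swap_apply_of_ne_of_ne hyab.1 hyab.2
      have h1 := hmap x y
      rw [hσx, hσy] at h1
      rw [h1]
      have hfix : ∀ u ∈ restrictWord L' x y, σ u = u := by
        intro u hu
        rcases (mem_restrict.1 hu).2 with rfl | rfl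
        exacts [hσx, hσy]
      rw [List.map_congr_left hfix]
      simp

lemma restrict_swap_pair {L' P S : List V} {a b : V} (hnd : L'.Nodup)
    (hd : L' = P ++ a :: b :: S) :
    restrictWord (L'.map (Equiv.swap a b)) a b = [b, a] := by
  have hab : a ≠ b := (nodup_anchor hnd hd).2.2.2.2.1
  set σ := Equiv.swap a b with hσ
  have hinj : Function.Injective (σ : V → V) := σ.injective
  have h1 : restrictWord (L'.map σ) (σ b) (σ a) = (restrictWord L' b a).map σ :=
    restrict_map σ hinj L' b a
  have hσa : σ a = b := Equiv.swap_apply_left a b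
  have hσb : σ b = a := Equiv.swap_apply_right a b
  rw [hσa, hσb] at h1
  rw [h1, restrict_comm, restrict_anchor_pair hnd hd]
  simp [hσa, hσb]

end Listing

section FlatNodup
set_option linter.unusedSectionVars false
set_option linter.unusedVariables false
variable {V : Type*} [DecidableEq V]

lemma mem_block {e : Sym2 V} {z : V} (h : z ∈ [e.out.1, e.out.2]) : z ∈ e := by
  rcases List.mem_cons.1 h with h | h
  · exact h ▸ Sym2.out_fst_mem e
  · rcases List.mem_cons.1 h with h | h
    · exact h ▸ Sym2.out_snd_mem e
    · simp at h

lemma nodup_pair_flatMap :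
    ∀ (ps : List (Sym2 V)), ps.Nodup → (∀ e ∈ ps, ¬ e.IsDiag) →
    (∀ e ∈ ps, ∀ f ∈ ps, e ≠ f → ∀ v : V, v ∈ e → v ∉ f) →
    (ps.flatMap (fun e => [e.out.1, e.out.2])).Nodup := by
  intro ps
  induction ps with
  | nil => intro _ _ _; simp
  | cons e ps ih =>
    intro hnd hdiag hdisj
    rw [List.flatMap_cons, List.nodup_append]
    obtain ⟨heps, hnd'⟩ := List.nodup_cons.1 hnd
    refine ⟨?_, ?_, ?_⟩
    · have : e.out.1 ≠ e.out.2 := by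
        intro hc
        apply hdiag e (by simp)
        have : e = s(e.out.1, e.out.2) := by conv_lhs => rw [← e.out_eq]
        rw [this, Sym2.mk_isDiag_iff]
        exact hc
      simp [this]
    · exact ih hnd' (fun f hf => hdiag f (by simp [hf]))
        (fun f hf g hg => hdisj f (by simp [hf]) g (by simp [hg]))
    · intro z hz z' hz' hzz'; subst hzz'
      obtain ⟨f, hf, hzf⟩ := List.mem_flatMap.1 hz'
      have hef : e ≠ f := fun hc => heps (hc ▸ hf)
      exact hdisj e (by simp) f (by simp [hf]) hef z (mem_block hz) (mem_block hzf)

end FlatNodup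

set_option maxHeartbeats 1000000 in
theorem stmt2_aux {V : Type*} [Fintype V] [DecidableEq V] (H : SimpleGraph V)
    (M : Set (Sym2 V))
    (hM : ∀ e ∈ M, ¬ e.IsDiag)
    (hME : M ∩ H.edgeSet = ∅)
    (hmatch : ∀ e ∈ M, ∀ f ∈ M, e ≠ f → ∀ v : V, v ∈ e → v ∉ f)
    (hG : ∃ w : List V, (∀ v : V, v ∈ w) ∧
      ∀ x y : V, x ≠ y → ((SimpleGraph.fromEdgeSet (H.edgeSet ∪ M)).Adj x y ↔
        pattern11Count (restrictWord w x y) ≤ 0)) :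
    ∃ u : List V, (∀ v : V, v ∈ u) ∧
      ∀ x y : V, x ≠ y → (H.Adj x y ↔ pattern11Count (restrictWord u x y) ≤ 1) := by
  classical
  obtain ⟨w₀, hw₀mem, hw₀iff⟩ := hG
  set G := SimpleGraph.fromEdgeSet (H.edgeSet ∪ M) with hGdef
  -- graph facts
  have hMnotH : ∀ x y : V, s(x,y) ∈ M → ¬ H.Adj x y := by
    intro x y hm hadj
    have : s(x,y) ∈ M ∩ H.edgeSet := ⟨hm, (SimpleGraph.mem_edgeSet H).2 hadj⟩
    rw [hME] at this
    exact this
  have hHG : ∀ x y : V, H.Adj x y → G.Adj x y := by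
    intro x y hadj
    rw [hGdef, SimpleGraph.fromEdgeSet_adj]
    exact ⟨Or.inl ((SimpleGraph.mem_edgeSet H).2 hadj), hadj.ne⟩
  have hnotG : ∀ x y : V, x ≠ y → ¬ H.Adj x y → s(x,y) ∉ M → ¬ G.Adj x y := by
    intro x y hxy hnadj hnm hadj
    rw [hGdef, SimpleGraph.fromEdgeSet_adj] at hadj
    rcases hadj.1 with h | h
    · exact hnadj ((SimpleGraph.mem_edgeSet H).1 h)
    · exact hnm h
  -- w₀ properties
  have hedge0 : ∀ x y : V, x ≠ y → G.Adj x y → pattern11Count (restrictWord w₀ x y) = 0 :=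
    fun x y hxy hadj => Nat.le_zero.1 ((hw₀iff x y hxy).1 hadj)
  have hnon0 : ∀ x y : V, x ≠ y → ¬ G.Adj x y → 1 ≤ pattern11Count (restrictWord w₀ x y) := by
    intro x y hxy hnadj
    by_contra hc
    push_neg at hc
    exact hnadj ((hw₀iff x y hxy).2 (by omega))
  obtain ⟨w, hwmem, hwedge, hwnon, hwcount⟩ := uniformize G _ w₀ rfl hw₀mem hedge0 hnon0
  -- list of matched pairs
  set ps : List (Sym2 V) := (Set.toFinite M).toFinset.toList with hps
  have hpsnd : ps.Nodup := Finset.nodup_toList _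
  have hpsmem : ∀ e : Sym2 V, e ∈ ps ↔ e ∈ M := by
    intro e
    rw [hps, Finset.mem_toList, Set.Finite.mem_toFinset]
  have hdisj : ∀ e ∈ ps, ∀ f ∈ ps, e ≠ f → ∀ v : V, v ∈ e → v ∉ f :=
    fun e he f hf => hmatch e ((hpsmem e).1 he) f ((hpsmem f).1 hf)
  have hdiag : ∀ e ∈ ps, ¬ e.IsDiag := fun e he => hM e ((hpsmem e).1 he)
  have heq : ∀ e : Sym2 V, e = s(e.out.1, e.out.2) := by
    intro e; conv_lhs => rw [← e.out_eq]
  -- the listing L'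
  set F : List V := ps.flatMap (fun e => [e.out.1, e.out.2]) with hF
  have hFnd : F.Nodup := nodup_pair_flatMap ps hpsnd hdiag hdisj
  set R : List V := Finset.univ.toList.filter (fun v => decide (v ∉ F)) with hR
  set L' : List V := F ++ R with hL'
  have hL'mem : ∀ v : V, v ∈ L' := by
    intro v
    rw [hL', List.mem_append]
    by_cases hv : v ∈ F
    · exact Or.inl hv
    · refine Or.inr ?_
      rw [hR, List.mem_filter]
      exact ⟨Finset.mem_toList.2 (Finset.mem_univ v), by simp [hv]⟩
  have hL'nd : L'.Nodup := by
    rw [hL', List.nodup_append]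
    refine ⟨hFnd, List.Nodup.filter _ (Finset.nodup_toList _), ?_⟩
    intro z hzF z' hzR hzz'; subst hzz'
    rw [hR, List.mem_filter] at hzR
    have := hzR.2
    simp at this
    exact this hzF
  -- anchors
  have hanchor : ∀ e ∈ ps, ∃ P S : List V, L' = P ++ e.out.1 :: e.out.2 :: S := by
    intro e he
    obtain ⟨X, Z, hXZ⟩ := List.append_of_mem he
    refine ⟨X.flatMap (fun f => [f.out.1, f.out.2]),
      (Z.flatMap (fun f => [f.out.1, f.out.2])) ++ R, ?_⟩
    rw [hL', hF, hXZ, List.flatMap_append, List.flatMap_cons]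
    simp [List.append_assoc]
  -- the word
  set PermPart : List V :=
    L' ++ ps.flatMap (fun e => (L'.map (Equiv.swap e.out.1 e.out.2)) ++ L') with hPP
  set u : List V := PermPart ++ (w ++ w) with hu
  have humem : ∀ v : V, v ∈ u := by
    intro v
    rw [hu]
    exact List.mem_append.2 (Or.inr (List.mem_append.2 (Or.inl (hwmem v))))
  refine ⟨u, humem, ?_⟩
  -- generic decomposition of the restriction of u
  have hsplit : ∀ x y : V, (fun (e : Sym2 V) =>
      restrictWord ((L'.map (Equiv.swap e.out.1 e.out.2)) ++ L') x y)
      = fun e => restrictWord (L'.map (Equiv.swap e.out.1 e.out.2)) x y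
          ++ restrictWord L' x y := by
    intro x y
    funext e
    rw [restrict_append]
  have hres : ∀ x y : V, restrictWord u x y =
      (restrictWord L' x y ++
        (ps.flatMap (fun e =>
          restrictWord (L'.map (Equiv.swap e.out.1 e.out.2)) x y ++ restrictWord L' x y))) ++
        (restrictWord w x y ++ restrictWord w x y) := by
    intro x y
    rw [hu, restrict_append, hPP, restrict_append, restrict_flatMap, restrict_append, hsplit]
    simp only [restrict_append]
    have hfe : (fun (e : Sym2 V) =>
        restrictWord (List.map (⇑(Equiv.swap (Quot.out e).1 (Quot.out e).2)) L') x y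
          ++ restrictWord L' x y)
        = (fun (e : Sym2 V) =>
        restrictWord (List.map (⇑(Equiv.swap (Quot.out e).1 (Quot.out e).2)) L') x y
          ++ (restrictWord F x y ++ restrictWord R x y)) := by
      funext e
      rw [hL', restrict_append]
    rw [hfe]
  -- Case 1 : H-edges get at most one 11
  have case1 : ∀ x y : V, x ≠ y → H.Adj x y →
      pattern11Count (restrictWord u x y) ≤ 1 := by
    intro x y hxy hadj
    have hGadj := hHG x y hadj
    obtain ⟨s, t, hst, hr0⟩ : ∃ s t : V, s ≠ t ∧ restrictWord L' x y = [s, t] := by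
      rcases restrict_eq_pair (l := L') hxy (hL'mem x) (hL'mem y) hL'nd with h | h
      · exact ⟨x, y, hxy, h⟩
      · exact ⟨y, x, Ne.symm hxy, h⟩
    have hblocks : ∀ e ∈ ps,
        restrictWord (L'.map (Equiv.swap e.out.1 e.out.2)) x y ++ restrictWord L' x y
          = JW s t 2 := by
      intro e he
      obtain ⟨P, S, hPS⟩ := hanchor e he
      have hno : ¬((x = e.out.1 ∧ y = e.out.2) ∨ (x = e.out.2 ∧ y = e.out.1)) := by
        have hEM : e ∈ M := (hpsmem e).1 he
        rintro (⟨h1, h2⟩ | ⟨h1, h2⟩)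
        · refine hMnotH x y ?_ hadj
          have : s(x, y) = e := by rw [h1, h2, ← heq e]
          rw [this]; exact hEM
        · refine hMnotH x y ?_ hadj
          have : s(x, y) = e := by rw [h1, h2, Sym2.eq_swap, ← heq e]
          rw [this]; exact hEM
      rw [restrict_swap_eq hL'nd hPS hL'mem x y hxy hno, hr0, pair_pair_JW]
    have hflat : ps.flatMap (fun e =>
        restrictWord (L'.map (Equiv.swap e.out.1 e.out.2)) x y ++ restrictWord L' x y)
        = JW s t (2 * ps.length) := by
      rw [flatMap_const hblocks, JW_flat]
    have hladj : pattern11Count (restrictWord w x y) = 0 := hwedge x y hxy hGadj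
    have hlcount : (restrictWord w x y).count x = (restrictWord w x y).count y := by
      rw [count_restrict_left, count_restrict_right]
      exact hwcount x y
    obtain ⟨k, hlsh⟩ := alt_even_structure x y hxy _ (restrict_all_mem w x y) hladj hlcount
    have hll : pattern11Count (restrictWord w x y ++ restrictWord w x y) = 0 := by
      rcases hlsh with h | h
      · rw [h, ← JW_add]
        exact p11_JW _ _ hxy _
      · rw [h, ← JW_add]
        exact p11_JW _ _ (Ne.symm hxy) _
    have hfront : pattern11Count (restrictWord L' x y ++
        (ps.flatMap (fun e =>
          restrictWord (L'.map (Equiv.swap e.out.1 e.out.2)) x y ++ restrictWord L' x y))) = 0 := by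
      rw [hflat, hr0]
      have : ([s, t] : List V) ++ JW s t (2 * ps.length) = JW s t (2 * ps.length + 1) := by
        rw [JW_succ]; rfl
      rw [this]
      exact p11_JW s t hst _
    rw [hres x y]
    have := p11_append_le
      (restrictWord L' x y ++
        (ps.flatMap (fun e =>
          restrictWord (L'.map (Equiv.swap e.out.1 e.out.2)) x y ++ restrictWord L' x y)))
      (restrictWord w x y ++ restrictWord w x y)
    omega
  -- Case 2 : matched pairs get at least two 11s
  have case2 : ∀ x y : V, x ≠ y → s(x,y) ∈ M →
      2 ≤ pattern11Count (restrictWord u x y) := by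
    intro x y hxy hm
    have he₀ : s(x,y) ∈ ps := (hpsmem _).2 hm
    set e₀ : Sym2 V := s(x,y) with he₀def
    set a : V := e₀.out.1 with hadef
    set b : V := e₀.out.2 with hbdef
    obtain ⟨P, S, hPS⟩ := hanchor e₀ he₀
    have hab : a ≠ b := (nodup_anchor hL'nd hPS).2.2.2.2.1
    have hxyab : (x = a ∧ y = b) ∨ (x = b ∧ y = a) := by
      have h : s(x, y) = s(a, b) := by rw [hadef, hbdef, ← heq e₀]
      replace h := (Sym2.mk_eq_mk_iff (p := (x, y)) (q := (a, b))).1 h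
      rcases h with h | h
      · exact Or.inl ⟨congrArg Prod.fst h, congrArg Prod.snd h⟩
      · right
        have h1 := congrArg Prod.fst h
        have h2 := congrArg Prod.snd h
        simp [Prod.swap] at h1 h2
        exact ⟨h1, h2⟩
    have hswap : restrictWord u x y = restrictWord u a b := by
      rcases hxyab with ⟨h1, h2⟩ | ⟨h1, h2⟩
      · rw [h1, h2]
      · rw [h1, h2, restrict_comm u b a]
    rw [hswap]
    have hrab : restrictWord L' a b = [a, b] := restrict_anchor_pair hL'nd hPS
    obtain ⟨X, Z, hXZ⟩ := List.append_of_mem he₀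
    have hnodXZ : e₀ ∉ X ∧ e₀ ∉ Z := by
      have := hpsnd
      rw [hXZ, List.nodup_append] at this
      obtain ⟨h1, h2, h3⟩ := this
      exact ⟨fun hc => h3 _ hc _ (by simp) rfl, (List.nodup_cons.1 h2).1⟩
    have hother : ∀ e ∈ ps, e ≠ e₀ →
        restrictWord (L'.map (Equiv.swap e.out.1 e.out.2)) a b ++ restrictWord L' a b
          = JW a b 2 := by
      intro e heps hne
      obtain ⟨P', S', hPS'⟩ := hanchor e heps
      have hno : ¬((a = e.out.1 ∧ b = e.out.2) ∨ (a = e.out.2 ∧ b = e.out.1)) := by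
        have haine₀ : a ∈ e₀ := Sym2.out_fst_mem e₀
        have hnotine : a ∉ e := hdisj e₀ he₀ e heps (Ne.symm hne) a haine₀
        rintro (⟨h1, h2⟩ | ⟨h1, h2⟩)
        · exact hnotine (h1 ▸ Sym2.out_fst_mem e)
        · exact hnotine (h1 ▸ Sym2.out_snd_mem e)
      rw [restrict_swap_eq hL'nd hPS' hL'mem a b hab hno, hrab, pair_pair_JW]
    have hXconst : ∀ e ∈ X,
        restrictWord (L'.map (Equiv.swap e.out.1 e.out.2)) a b ++ restrictWord L' a b
          = JW a b 2 := by
      intro e he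
      exact hother e (by rw [hXZ]; simp [he]) (fun hc => hnodXZ.1 (hc ▸ he))
    have hZconst : ∀ e ∈ Z,
        restrictWord (L'.map (Equiv.swap e.out.1 e.out.2)) a b ++ restrictWord L' a b
          = JW a b 2 := by
      intro e he
      exact hother e (by rw [hXZ]; simp [he]) (fun hc => hnodXZ.2 (hc ▸ he))
    have he₀blk : restrictWord (L'.map (Equiv.swap e₀.out.1 e₀.out.2)) a b
        ++ restrictWord L' a b = [b, a] ++ [a, b] := by
      rw [restrict_swap_pair hL'nd hPS, hrab]
    -- assemble the flatMap
    have hflat2 : ps.flatMap (fun e =>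
        restrictWord (L'.map (Equiv.swap e.out.1 e.out.2)) a b ++ restrictWord L' a b)
        = JW a b (2 * X.length) ++ (([b, a] ++ [a, b]) ++ JW a b (2 * Z.length)) := by
      rw [hXZ, List.flatMap_append, List.flatMap_cons]
      rw [flatMap_const hXconst, JW_flat, flatMap_const hZconst, JW_flat, he₀blk]
    rw [hres a b, hflat2, hrab]
    -- normal form
    have hnf : (([a, b] : List V) ++
        (JW a b (2 * X.length) ++ (([b, a] ++ [a, b]) ++ JW a b (2 * Z.length))))
        = (JW a b (2 * X.length + 1) ++ [b]) ++ ([a] ++ JW a b (2 * Z.length + 1)) := by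
      rw [JW_succ a b (2 * X.length), JW_succ a b (2 * Z.length)]
      simp [List.append_assoc]
    rw [hnf]
    have h1 : 1 ≤ pattern11Count (JW a b (2 * X.length + 1) ++ [b]) :=
      p11_JW_b a b hab _
    have h2 : 1 ≤ pattern11Count ([a] ++ JW a b (2 * Z.length + 1)) :=
      p11_a_JW a b hab _
    have h3 := p11_append_ge (JW a b (2 * X.length + 1) ++ [b])
      ([a] ++ JW a b (2 * Z.length + 1))
    have h4 := p11_append_ge
      ((JW a b (2 * X.length + 1) ++ [b]) ++ ([a] ++ JW a b (2 * Z.length + 1)))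
      (restrictWord w a b ++ restrictWord w a b)
    omega
  -- Case 3 : non-edges of G get at least two 11s
  have case3 : ∀ x y : V, x ≠ y → ¬ G.Adj x y →
      2 ≤ pattern11Count (restrictWord u x y) := by
    intro x y hxy hnadj
    have h1 := hwnon x y hxy hnadj
    rw [hres x y]
    have h2 := p11_append_ge
      (restrictWord L' x y ++
        (ps.flatMap (fun e =>
          restrictWord (L'.map (Equiv.swap e.out.1 e.out.2)) x y ++ restrictWord L' x y)))
      (restrictWord w x y ++ restrictWord w x y)
    have h3 := p11_append_ge (restrictWord w x y) (restrictWord w x y)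
    omega
  -- conclusion
  intro x y hxy
  constructor
  · intro hadj
    exact case1 x y hxy hadj
  · intro hcount
    by_contra hnadj
    by_cases hm : s(x,y) ∈ M
    · have := case2 x y hxy hm
      omega
    · have := case3 x y hxy (hnotG x y hxy hnadj hm)
      omega


/-- if `M` is a matching on `V` disjoint from the edge set of `H` (a set of
unordered pairs of distinct vertices, no two of which share a vertex), and the graph `G`
obtained from `H` by adding the edges of `M` is word-representable, then `H` is
1-11-representable. -/
theorem stmt2 {V : Type*} [Fintype V] [DecidableEq V] (H : SimpleGraph V)
    (M : Set (Sym2 V))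
    (hM : ∀ e ∈ M, ¬ e.IsDiag)
    (hME : M ∩ H.edgeSet = ∅)
    (hmatch : ∀ e ∈ M, ∀ f ∈ M, e ≠ f → ∀ v : V, v ∈ e → v ∉ f)
    (hG : Representable 0 (SimpleGraph.fromEdgeSet (H.edgeSet ∪ M))) :
    Representable 1 H := by
  obtain ⟨w₀, hw₀⟩ := hG
  obtain ⟨u, h1, h2⟩ := stmt2_aux H M hM hME hmatch ⟨w₀, hw₀.1, hw₀.2⟩
  exact ⟨u, h1, h2⟩
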